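/- Fix α ≥ 1, β ≥ 2 with 2(β² + 1) < 2^α, and let S = star(α, β) be the graph obtained from the star K_{1,β} by subdividing each edge into a path of length α. If p is a distribution of β·2^α pebbles on S such that for every leaf l it is possible to place 2^α pebbles on l, then p places exactly 2^α pebbles on each leaf and zero pebbles on every other vertex. -/

import Mathlib

variable {V : Type*} [DecidableEq V]

/-- Result of a pebbling move `u → v`: remove two pebbles from `u`, add one to `v`. -/
def applyMove (p : V → ℕ) (u v : V) (x : V) : ℕ :=
  (if x = u then p x - 2 else p x) + (if x = v then 1 else 0)

/-- A list of moves is a valid sequence of pebbling moves from `p` in `G`. -/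
def IsValidSeq (G : SimpleGraph V) : (V → ℕ) → List (V × V) → Prop
  | _, [] => True
  | p, m :: rest => G.Adj m.1 m.2 ∧ 2 ≤ p m.1 ∧ IsValidSeq G (applyMove p m.1 m.2) rest

/-- The distribution after executing a sequence of pebbling moves. -/
def applySeq (p : V → ℕ) : List (V × V) → V → ℕ
  | [] => p
  | m :: rest => applySeq (applyMove p m.1 m.2) rest

/-- Indegree of a vertex in a directed multigraph (multiset of directed edges). -/
def indeg (D : Multiset (V × V)) (v : V) : ℕ :=
  Multiset.card (D.filter fun e => e.2 = v)

/-- Outdegree of a vertex in a directed multigraph. -/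
def outdeg (D : Multiset (V × V)) (v : V) : ℕ :=
  Multiset.card (D.filter fun e => e.1 = v)

/-- balance(D,p,v) = p(v) + indeg_D(v) - 2·outdeg_D(v). -/
def balance (D : Multiset (V × V)) (p : V → ℕ) (v : V) : ℤ :=
  (p v : ℤ) + (indeg D v : ℤ) - 2 * (outdeg D v : ℤ)

/-- `D` is orderable under `p`: some ordering of the edge multiset of `D`
is a valid sequence of pebbling moves. -/
def Orderable (G : SimpleGraph V) (D : Multiset (V × V)) (p : V → ℕ) : Prop :=
  ∃ σ : List (V × V), (σ : Multiset (V × V)) = D ∧ IsValidSeq G p σ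

/-- A directed multigraph is acyclic if its edge relation admits no directed cycle. -/
def DAcyclic (D : Multiset (V × V)) : Prop :=
  ∀ v : V, ¬ Relation.TransGen (fun a b => (a, b) ∈ D) v v

/-- The strongly connected component of `a` in the directed multigraph `D`. -/
def SCC (D : Multiset (V × V)) (a : V) : Set V :=
  {b | Relation.ReflTransGen (fun x y => (x, y) ∈ D) a b ∧
       Relation.ReflTransGen (fun x y => (x, y) ∈ D) b a}

/-- `star(α,β)`: the star `K_{1,β}` with every edge subdivided into a path of length `α`.
`none` is the center; `some (j, i)` is the vertex at distance `i + 1` from the center on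
the `j`-th path, so `some (j, α-1)` is a leaf. -/
def starGraph (α β : ℕ) : SimpleGraph (Option (Fin β × Fin α)) :=
  SimpleGraph.fromRel (fun a b =>
    match a, b with
    | none, some (_, i) => i.val = 0
    | some (j, i), some (j', i') => j = j' ∧ i.val + 1 = i'.val
    | _, _ => False)

section AuxWeights

lemma pow2_le_two_mul_pow2 {a b : ℕ} (h : a ≤ b + 1) : 2 ^ a ≤ 2 * 2 ^ b := by
  calc 2 ^ a ≤ 2 ^ (b + 1) := Nat.pow_le_pow_right (by norm_num) h
    _ = 2 * 2 ^ b := by rw [pow_succ]; ring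

/-- Total weight w.r.t. a weight function satisfying `w v ≤ 2 * w u` on edges is
nonincreasing under valid pebbling sequences. -/
lemma weight_le [Fintype V] (G : SimpleGraph V) (w : V → ℕ)
    (hw : ∀ u v, G.Adj u v → w v ≤ 2 * w u) :
    ∀ (σ : List (V × V)) (p : V → ℕ), IsValidSeq G p σ →
      ∑ v, applySeq p σ v * w v ≤ ∑ v, p v * w v := by
  intro σ
  induction σ with
  | nil => intro p _; simp [applySeq]
  | cons m rest ih =>
    intro p h
    simp only [IsValidSeq] at h
    obtain ⟨hadj, hp, hrest⟩ := h
    simp only [applySeq]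
    refine (ih _ hrest).trans ?_
    have hle := hw m.1 m.2 hadj
    have key : ∑ v, applyMove p m.1 m.2 v * w v + 2 * w m.1 = ∑ v, p v * w v + w m.2 := by
      have expand : ∀ v, applyMove p m.1 m.2 v * w v
          = (if v = m.1 then (p v - 2) * w v else p v * w v) + (if v = m.2 then w v else 0) := by
        intro v
        simp only [applyMove]
        split_ifs <;> ring
      rw [Finset.sum_congr rfl (fun v _ => expand v), Finset.sum_add_distrib,
        Finset.sum_ite_eq' Finset.univ m.2 w]
      simp only [Finset.mem_univ, if_true]
      rw [← Finset.add_sum_erase _ _ (Finset.mem_univ m.1),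
        ← Finset.add_sum_erase _ (fun v => p v * w v) (Finset.mem_univ m.1)]
      rw [if_pos rfl]
      have he : ∑ v ∈ Finset.univ.erase m.1,
            (if v = m.1 then (p v - 2) * w v else p v * w v)
          = ∑ v ∈ Finset.univ.erase m.1, p v * w v := by
        apply Finset.sum_congr rfl
        intro v hv
        rw [if_neg (Finset.ne_of_mem_erase hv)]
      rw [he]
      have h2 : (p m.1 - 2) * w m.1 + 2 * w m.1 = p m.1 * w m.1 := by
        rw [← add_mul, Nat.sub_add_cancel hp]
      omega
    omega

/-- The weight function targeting leaf `j`. -/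
def wfun (α β : ℕ) (j : Fin β) : Option (Fin β × Fin α) → ℕ
  | none => 2 ^ α
  | some x => if x.1 = j then 2 ^ (α + 1 + x.2.val) else 2 ^ (α - 1 - x.2.val)

lemma wfun_none (α β : ℕ) (j : Fin β) : wfun α β j none = 2 ^ α := rfl

lemma wfun_some (α β : ℕ) (j j' : Fin β) (i : Fin α) :
    wfun α β j (some (j', i)) = if j' = j then 2 ^ (α + 1 + i.val) else 2 ^ (α - 1 - i.val) :=
  rfl

lemma wfun_adj {α β : ℕ} (hα : 1 ≤ α) (j : Fin β) :
    ∀ u v, (starGraph α β).Adj u v → wfun α β j v ≤ 2 * wfun α β j u := by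
  intro u v huv
  rw [starGraph, SimpleGraph.fromRel_adj] at huv
  obtain ⟨hne, h⟩ := huv
  rcases u with _ | ⟨j1, i1⟩ <;> rcases v with _ | ⟨j2, i2⟩
  · simp at h
  · -- none, some
    have hi : i2.val = 0 := by
      rcases h with h | h
      · exact h
      · exact absurd h (by simp)
    have := i2.isLt
    simp only [wfun]
    split_ifs <;> apply pow2_le_two_mul_pow2 <;> omega
  · -- some, none
    have hi : i1.val = 0 := by
      rcases h with h | h
      · exact absurd h (by simp)
      · exact h
    have := i1.isLt
    simp only [wfun]
    split_ifs <;> apply pow2_le_two_mul_pow2 <;> omega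
  · -- some, some
    have hij : j1 = j2 ∧ (i1.val + 1 = i2.val ∨ i2.val + 1 = i1.val) := by
      rcases h with ⟨h1, h2⟩ | ⟨h1, h2⟩
      · exact ⟨h1, Or.inl h2⟩
      · exact ⟨h1.symm, Or.inr h2⟩
    obtain ⟨rfl, hi⟩ := hij
    have h1 := i1.isLt
    have h2 := i2.isLt
    simp only [wfun]
    split_ifs <;> apply pow2_le_two_mul_pow2 <;> omega

end AuxWeights

/-- Star lemma: if `2(β² + 1) < 2^α` and a distribution of `β·2^α` pebbles on
`star(α,β)` can place `2^α` pebbles on every leaf, then it puts exactly `2^α` pebbles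
on each leaf and none elsewhere. -/
theorem star_lemma (α β : ℕ) (hα : 1 ≤ α) (hβ : 2 ≤ β)
    (hgap : 2 * (β ^ 2 + 1) < 2 ^ α)
    (p : Option (Fin β × Fin α) → ℕ)
    (hsize : ∑ x : Option (Fin β × Fin α), p x = β * 2 ^ α)
    (hreach : ∀ j : Fin β, ∃ σ : List (Option (Fin β × Fin α) × Option (Fin β × Fin α)),
      IsValidSeq (starGraph α β) p σ ∧
      2 ^ α ≤ applySeq p σ (some (j, ⟨α - 1, by omega⟩))) :
    (∀ j : Fin β, p (some (j, ⟨α - 1, by omega⟩)) = 2 ^ α) ∧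
    p none = 0 ∧
    (∀ (j : Fin β) (i : Fin α), i.val ≠ α - 1 → p (some (j, i)) = 0) := by
  classical
  obtain ⟨b, rfl⟩ : ∃ b, β = b + 2 := ⟨β - 2, by omega⟩
  have hlt : α - 1 < α := by omega
  set A := 2 ^ α with hA
  set B := 2 ^ (2 * α) with hB
  have hAB : A * A = B := by rw [hA, hB, ← pow_add]; ring_nf
  have hApos : 0 < A := by rw [hA]; positivity
  have hBpos : 0 < B := by rw [hB]; positivity
  have hbA : b + 2 < A := by
    have h1 : b + 2 ≤ (b + 2) ^ 2 := Nat.le_self_pow two_ne_zero _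
    omega
  -- per-leaf weight inequality
  have hS : ∀ j : Fin (b + 2), A * B ≤ ∑ v, p v * wfun α (b + 2) j v := by
    intro j
    obtain ⟨σ, hσ, hval⟩ := hreach j
    have h1 := weight_le (starGraph α (b + 2)) (wfun α (b + 2) j) (wfun_adj hα j) σ p hσ
    have h3 : wfun α (b + 2) j (some (j, ⟨α - 1, hlt⟩)) = B := by
      rw [wfun_some, if_pos rfl, hB]
      congr 1
      show α + 1 + (α - 1) = 2 * α
      omega
    have h2 : applySeq p σ (some (j, ⟨α - 1, hlt⟩))
          * wfun α (b + 2) j (some (j, ⟨α - 1, hlt⟩))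
        ≤ ∑ v, applySeq p σ v * wfun α (b + 2) j v :=
      Finset.single_le_sum (f := fun v => applySeq p σ v * wfun α (b + 2) j v)
        (fun v _ => Nat.zero_le _) (Finset.mem_univ _)
    have h4 : A * B ≤ applySeq p σ (some (j, ⟨α - 1, hlt⟩))
          * wfun α (b + 2) j (some (j, ⟨α - 1, hlt⟩)) := by
      rw [h3]
      exact Nat.mul_le_mul_right _ hval
    exact h4.trans (h2.trans h1)
  -- the summed weight function
  set W : Option (Fin (b + 2) × Fin α) → ℕ := fun v => ∑ j, wfun α (b + 2) j v with hW
  have hWnone : W none = (b + 2) * A := by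
    simp only [hW, wfun, Finset.sum_const, Finset.card_univ, Fintype.card_fin, smul_eq_mul]
    rfl
  have hWsome : ∀ (j' : Fin (b + 2)) (i : Fin α),
      W (some (j', i)) = 2 ^ (α + 1 + i.val) + (b + 1) * 2 ^ (α - 1 - i.val) := by
    intro j' i
    have hle : 2 ^ (α - 1 - i.val) ≤ 2 ^ (α + 1 + i.val) :=
      Nat.pow_le_pow_right (by norm_num) (by omega)
    have heq : ∀ j : Fin (b + 2), wfun α (b + 2) j (some (j', i))
        = (if j' = j then 2 ^ (α + 1 + i.val) - 2 ^ (α - 1 - i.val) else 0)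
          + 2 ^ (α - 1 - i.val) := by
      intro j
      rw [wfun_some]
      split_ifs <;> omega
    simp only [hW]
    rw [Finset.sum_congr rfl (fun j _ => heq j), Finset.sum_add_distrib,
      Finset.sum_ite_eq Finset.univ j' (fun _ => 2 ^ (α + 1 + i.val) - 2 ^ (α - 1 - i.val)),
      Finset.sum_const, Finset.card_univ, Fintype.card_fin, smul_eq_mul]
    simp only [Finset.mem_univ, if_true]
    have hsplitmul : (b + 2) * 2 ^ (α - 1 - i.val)
        = (b + 1) * 2 ^ (α - 1 - i.val) + 2 ^ (α - 1 - i.val) := by ring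
    omega
  -- total inequality
  have hT : (b + 2) * (A * B) ≤ ∑ v, p v * W v := by
    calc (b + 2) * (A * B) = ∑ _j : Fin (b + 2), A * B := by
          simp [Finset.sum_const, Finset.card_univ]
      _ ≤ ∑ j : Fin (b + 2), ∑ v, p v * wfun α (b + 2) j v :=
          Finset.sum_le_sum fun j _ => hS j
      _ = ∑ v, p v * W v := by
          rw [Finset.sum_comm]
          exact Finset.sum_congr rfl fun v _ => by simp only [hW]; rw [← Finset.mul_sum]
  set M := B + b + 1 with hM
  -- strict bounds for non-leaf vertices
  have hbound_none : W none + (b + 2) * (b + 1) * A < M := by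
    rw [hWnone, hM]
    have hg : 2 * ((b + 2) ^ 2 + 1) * A ≤ A * A :=
      Nat.mul_le_mul_right A hgap.le
    nlinarith [hAB, hApos]
  have hbound_some : ∀ (j' : Fin (b + 2)) (i : Fin α), i.val ≠ α - 1 →
      W (some (j', i)) + (b + 2) * (b + 1) * A < M := by
    intro j' i hi
    have hiu := i.isLt
    have hα2 : 2 ≤ α := by omega
    rw [hWsome, hM]
    set C := 2 ^ (α - 1) with hC
    have hCpos : 0 < C := by rw [hC]; positivity
    have h2C : 2 * C = A := by
      rw [hC, hA, ← pow_succ']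
      congr 1
      omega
    have hCb : (b + 2) ^ 2 + 1 ≤ C := by omega
    have h1 : 2 * 2 ^ (α + 1 + i.val) ≤ B := by
      rw [hB]
      calc 2 * 2 ^ (α + 1 + i.val) = 2 ^ (α + 1 + i.val + 1) := (pow_succ' 2 _).symm ▸ by ring
        _ ≤ 2 ^ (2 * α) := Nat.pow_le_pow_right (by norm_num) (by omega)
    have h2 : 2 ^ (α - 1 - i.val) ≤ C := by
      rw [hC]
      exact Nat.pow_le_pow_right (by norm_num) (by omega)
    have e3 : (b + 1) * 2 ^ (α - 1 - i.val) ≤ (b + 1) * C := Nat.mul_le_mul_left _ h2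
    have e4 : (b + 1) * C + (b + 2) * (b + 1) * A + C ≤ 2 * C * C := by
      have hcoef : (b + 1) + (b + 2) * (b + 1) * 2 + 1 ≤ 2 * C := by nlinarith [hCb]
      calc (b + 1) * C + (b + 2) * (b + 1) * A + C
          = ((b + 1) + (b + 2) * (b + 1) * 2 + 1) * C := by rw [← h2C]; ring
        _ ≤ (2 * C) * C := Nat.mul_le_mul_right _ hcoef
        _ = 2 * C * C := by ring
    have e5 : 2 * (2 * C * C) = B := by
      rw [← hAB, ← h2C]; ring
    omega
  -- W is at most M everywhere
  have hWleaf : ∀ j' : Fin (b + 2), W (some (j', ⟨α - 1, hlt⟩)) = M := by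
    intro j'
    rw [hWsome, hM]
    have e1 : 2 ^ (α + 1 + (⟨α - 1, hlt⟩ : Fin α).val) = B := by
      rw [hB]; congr 1; show α + 1 + (α - 1) = 2 * α; omega
    have e2 : α - 1 - (⟨α - 1, hlt⟩ : Fin α).val = 0 := by
      show α - 1 - (α - 1) = 0; omega
    rw [e1, e2, pow_zero]
    ring
  have hWleM : ∀ v, W v ≤ M := by
    intro v
    rcases v with _ | ⟨j', i⟩
    · omega
    · by_cases hi : i.val = α - 1
      · have : i = ⟨α - 1, hlt⟩ := Fin.ext hi
        rw [this, hWleaf]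
      · have := hbound_some j' i hi
        omega
  -- total deficiency bound
  have hTot : ∑ v, p v * M = (b + 2) * A * M := by
    rw [← Finset.sum_mul, hsize]
  have hsum2 : ∑ v, p v * W v + ∑ v, p v * (M - W v) = (b + 2) * A * M := by
    rw [← Finset.sum_add_distrib, ← hTot]
    exact Finset.sum_congr rfl fun v _ => by
      rw [← Nat.mul_add, Nat.add_sub_cancel' (hWleM v)]
  have hMexp : (b + 2) * A * M = (b + 2) * (A * B) + (b + 2) * (b + 1) * A := by
    rw [hM]; ring
  have hdef : ∑ v, p v * (M - W v) ≤ (b + 2) * (b + 1) * A := by omega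
  -- vertices with strict bound carry no pebbles
  have hzero : ∀ v, W v + (b + 2) * (b + 1) * A < M → p v = 0 := by
    intro v hv
    by_contra h0
    have h1 : 1 ≤ p v := Nat.pos_of_ne_zero h0
    have h2 : p v * (M - W v) ≤ ∑ v, p v * (M - W v) :=
      Finset.single_le_sum (f := fun v => p v * (M - W v))
        (fun _ _ => Nat.zero_le _) (Finset.mem_univ v)
    have h3 : M - W v ≤ p v * (M - W v) := Nat.le_mul_of_pos_left _ h1
    omega
  have hpnone : p none = 0 := hzero none hbound_none
  have hpmid : ∀ (j : Fin (b + 2)) (i : Fin α), i.val ≠ α - 1 → p (some (j, i)) = 0 :=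
    fun j i hi => hzero _ (hbound_some j i hi)
  -- now everything is on the leaves
  set L : Fin (b + 2) → ℕ := fun j => p (some (j, ⟨α - 1, hlt⟩)) with hLdef
  have hinner : ∀ j' : Fin (b + 2), ∑ i : Fin α, p (some (j', i)) = L j' := by
    intro j'
    rw [Finset.sum_eq_single (⟨α - 1, hlt⟩ : Fin α)]
    · intro i _ hne
      exact hpmid j' i fun h => hne (Fin.ext h)
    · intro h; exact absurd (Finset.mem_univ _) h
  have hLsum : ∑ j', L j' = (b + 2) * A := by
    have hs := hsize
    rw [Fintype.sum_option, Fintype.sum_prod_type] at hs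
    rw [hpnone, zero_add] at hs
    rw [Finset.sum_congr rfl fun j' _ => hinner j'] at hs
    exact hs
  have hwleaf : ∀ j j' : Fin (b + 2),
      wfun α (b + 2) j (some (j', ⟨α - 1, hlt⟩)) = if j' = j then B else 1 := by
    intro j j'
    rw [wfun_some]
    split_ifs with hc
    · rw [hB]; congr 1; show α + 1 + (α - 1) = 2 * α; omega
    · have e2 : α - 1 - (⟨α - 1, hlt⟩ : Fin α).val = 0 := by
        show α - 1 - (α - 1) = 0; omega
      rw [e2, pow_zero]
  have hSval : ∀ j : Fin (b + 2), ∑ v, p v * wfun α (b + 2) j v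
      = L j * B + ∑ j' ∈ Finset.univ.erase j, L j' := by
    intro j
    rw [Fintype.sum_option, Fintype.sum_prod_type, hpnone, zero_mul, zero_add]
    have hinner2 : ∀ j' : Fin (b + 2),
        ∑ i : Fin α, p (some (j', i)) * wfun α (b + 2) j (some (j', i))
        = L j' * (if j' = j then B else 1) := by
      intro j'
      rw [Finset.sum_eq_single (⟨α - 1, hlt⟩ : Fin α)]
      · rw [hwleaf]
      · intro i _ hne
        rw [hpmid j' i fun h => hne (Fin.ext h), zero_mul]
      · intro h; exact absurd (Finset.mem_univ _) h
    rw [Finset.sum_congr rfl fun j' _ => hinner2 j']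
    rw [← Finset.add_sum_erase _ _ (Finset.mem_univ j), if_pos rfl]
    congr 1
    apply Finset.sum_congr rfl
    intro j' hj'
    rw [if_neg (Finset.ne_of_mem_erase hj'), mul_one]
  have hRj : ∀ j : Fin (b + 2), L j + ∑ j' ∈ Finset.univ.erase j, L j' = (b + 2) * A :=
    fun j => by rw [Finset.add_sum_erase _ L (Finset.mem_univ j), hLsum]
  have hLge : ∀ j, A ≤ L j := by
    intro j
    by_contra h
    push_neg at h
    have h1 := hS j
    rw [hSval j] at h1
    have h2 : L j * B + B ≤ A * B := by
      calc L j * B + B = (L j + 1) * B := by ring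
        _ ≤ A * B := Nat.mul_le_mul_right _ h
    have h3 : (b + 2) * A < A * A := (Nat.mul_lt_mul_right hApos).mpr hbA
    have h4 := hRj j
    omega
  have hLeq : ∀ j, L j = A := by
    intro j
    have h1 : (Finset.univ.erase j).card • A ≤ ∑ j' ∈ Finset.univ.erase j, L j' :=
      Finset.card_nsmul_le_sum _ _ _ fun j' _ => hLge j'
    have hcard : (Finset.univ.erase j).card = b + 1 := by
      rw [Finset.card_erase_of_mem (Finset.mem_univ j), Finset.card_univ, Fintype.card_fin]
      omega
    rw [hcard, smul_eq_mul] at h1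
    have h2 := hRj j
    have h3 := hLge j
    have h4 : (b + 2) * A = (b + 1) * A + A := by ring
    omega
  exact ⟨fun j => hLeq j, hpnone, hpmid⟩
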